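/- Suppose x : [0,∞) → ℝ^n solves the continuous accelerated Newton ODE ∇²E(x) ẍ + γ_b ẋ + γ_a ∇E(x) = 0 with γ_a, γ_b > 0, where ∇²E(x(t)) is positive definite for all t. Then the function t ↦ γ_a E(x(t)) + (1/2)⟨ẋ(t), ∇²E(x(t)) ẋ(t)⟩ has derivative -γ_b ‖ẋ(t)‖² + (1/2)⟨ẋ(t), (d/dt ∇²E(x(t))) ẋ(t)⟩; in particular, if E is quadratic (so ∇²E is constant), this energy is nonincreasing. -/

import Mathlib

open Set
open scoped InnerProductSpace

/-- Energy identity for the continuous accelerated Newton ODE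
∇²E(x) ẍ + γ_b ẋ + γ_a ∇E(x) = 0: the energy
γ_a E(x) + (1/2)⟨ẋ, ∇²E(x) ẋ⟩ has derivative
-γ_b‖ẋ‖² + (1/2)⟨ẋ, (d/dt ∇²E(x(t))) ẋ⟩; if ∇²E is constant along the
trajectory the energy is nonincreasing. -/
theorem accelerated_newton_energy {n : ℕ}
    (E : EuclideanSpace ℝ (Fin n) → ℝ) (hE : ContDiff ℝ 3 E)
    (γa γb : ℝ) (hγa : 0 < γa) (hγb : 0 < γb)
    (x x' x'' : ℝ → EuclideanSpace ℝ (Fin n))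
    (hx : ∀ t, HasDerivAt x (x' t) t)
    (hx' : ∀ t, HasDerivAt x' (x'' t) t)
    (Hess Hess' : ℝ → (EuclideanSpace ℝ (Fin n) →L[ℝ] EuclideanSpace ℝ (Fin n)))
    (hHess : ∀ t, Hess t = fderiv ℝ (gradient E) (x t))
    (hHessSymm : ∀ t, ∀ u w : EuclideanSpace ℝ (Fin n),
      ⟪Hess t u, w⟫_ℝ = ⟪u, Hess t w⟫_ℝ)
    (hHessPos : ∀ t, ∀ u : EuclideanSpace ℝ (Fin n), u ≠ 0 → 0 < ⟪u, Hess t u⟫_ℝ)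
    (hHess' : ∀ t, HasDerivAt Hess (Hess' t) t)
    (hode : ∀ t ∈ Ici (0 : ℝ),
      Hess t (x'' t) + γb • x' t + γa • gradient E (x t) = 0) :
    (∀ t ∈ Ici (0 : ℝ),
      HasDerivAt (fun s => γa * E (x s) + (1 / 2) * ⟪x' s, Hess s (x' s)⟫_ℝ)
        (-γb * ‖x' t‖ ^ 2 + (1 / 2) * ⟪x' t, Hess' t (x' t)⟫_ℝ) t) ∧
    ((∀ t, Hess' t = 0) →
      AntitoneOn (fun s => γa * E (x s) + (1 / 2) * ⟪x' s, Hess s (x' s)⟫_ℝ)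
        (Ici 0)) := by
  have hmain : ∀ t ∈ Ici (0 : ℝ),
      HasDerivAt (fun s => γa * E (x s) + (1 / 2) * ⟪x' s, Hess s (x' s)⟫_ℝ)
        (-γb * ‖x' t‖ ^ 2 + (1 / 2) * ⟪x' t, Hess' t (x' t)⟫_ℝ) t := by
    intro t ht
    have hEx : HasDerivAt (fun s => E (x s)) ⟪gradient E (x t), x' t⟫_ℝ t := by
      have hg : HasGradientAt E (gradient E (x t)) (x t) :=
        (hE.differentiable (by norm_num) (x t)).hasGradientAt
      exact ((hE.differentiable (by norm_num) (x t)).hasFDerivAt.comp_hasDerivAt t (hx t)).congr_deriv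
        (InnerProductSpace.toDual_symm_apply (𝕜 := ℝ) (E := EuclideanSpace ℝ (Fin n))).symm
    have hHx : HasDerivAt (fun s => Hess s (x' s))
        (Hess' t (x' t) + Hess t (x'' t)) t := (hHess' t).clm_apply (hx' t)
    have hinner : HasDerivAt (fun s => ⟪x' s, Hess s (x' s)⟫_ℝ)
        (⟪x' t, Hess' t (x' t) + Hess t (x'' t)⟫_ℝ + ⟪x'' t, Hess t (x' t)⟫_ℝ) t :=
      (hx' t).inner ℝ hHx
    have hD := (hEx.const_mul γa).add (hinner.const_mul (1 / 2))
    have hodeq : Hess t (x'' t) = -(γb • x' t) - γa • gradient E (x t) := by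
      have h := hode t ht
      linear_combination (norm := module) h
    have hval : -γb * ‖x' t‖ ^ 2 + (1 / 2) * ⟪x' t, Hess' t (x' t)⟫_ℝ
        = γa * ⟪gradient E (x t), x' t⟫_ℝ +
          1 / 2 * (⟪x' t, Hess' t (x' t) + Hess t (x'' t)⟫_ℝ + ⟪x'' t, Hess t (x' t)⟫_ℝ) := by
      have h1 : ⟪x'' t, Hess t (x' t)⟫_ℝ = ⟪x' t, Hess t (x'' t)⟫_ℝ := by
        rw [← hHessSymm t (x'' t) (x' t), real_inner_comm]
      rw [h1, inner_add_right, hodeq, inner_sub_right, inner_neg_right, inner_smul_right,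
        inner_smul_right, real_inner_self_eq_norm_sq, real_inner_comm (x' t)]
      ring
    rw [hval]
    exact hD
  refine ⟨hmain, fun hz => ?_⟩
  have hcx : Continuous x := continuous_iff_continuousAt.mpr fun t => (hx t).continuousAt
  have hcx' : Continuous x' := continuous_iff_continuousAt.mpr fun t => (hx' t).continuousAt
  have hcH : Continuous Hess := continuous_iff_continuousAt.mpr fun t => (hHess' t).continuousAt
  apply antitoneOn_of_deriv_nonpos (convex_Ici 0)
  · exact ((continuous_const.mul (hE.continuous.comp hcx)).add
      (continuous_const.mul (hcx'.inner (hcH.clm_apply hcx')))).continuousOn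
  · intro t ht
    rw [interior_Ici] at ht
    exact ((hmain t (mem_Ici.mpr (le_of_lt (mem_Ioi.mp ht)))).differentiableAt).differentiableWithinAt
  · intro t ht
    rw [interior_Ici] at ht
    rw [(hmain t (mem_Ici.mpr (le_of_lt (mem_Ioi.mp ht)))).deriv, hz]
    simp
    positivity
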